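/- Let k be an algebraically closed field of characteristic 2, and let K = k((t)) with valuation ring R = k[[t]]. Then the map Φ : K × K → K, Φ(u,v) = u² + v + t·v², is surjective. Equivalently, every element f ∈ K can be written as u² + v + t v² for some u, v ∈ K. -/

import Mathlib

open HahnSeries PowerSeries

section Aux

variable {k : Type*} [Field k] [IsAlgClosed k] [CharP k 2]

private lemma exists_sqrt' (c : k) : ∃ a : k, a ^ 2 = c :=
  IsAlgClosed.exists_pow_nat_eq c (n := 2) (by norm_num)

private lemma exists_as' (c : k) : ∃ a : k, a ^ 2 + a = c := by
  obtain ⟨a, ha⟩ := IsAlgClosed.exists_root (Polynomial.X ^ 2 + Polynomial.X - Polynomial.C c)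
    (by
      have h2 : (Polynomial.X ^ 2 + Polynomial.X - Polynomial.C c : Polynomial k).degree = 2 := by
        compute_degree!
      rw [h2]; norm_num)
  refine ⟨a, ?_⟩
  have := ha
  simp only [Polynomial.IsRoot, Polynomial.eval_sub, Polynomial.eval_add, Polynomial.eval_pow,
    Polynomial.eval_X, Polynomial.eval_C] at this
  linear_combination this

/-- coefficient of a square of a power series in char 2 -/
private lemma coeff_sq' (v : PowerSeries k) (m : ℕ) :
    PowerSeries.coeff m (v ^ 2) =
      if m % 2 = 0 then (PowerSeries.coeff (m / 2) v) ^ 2 else 0 := by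
  classical
  rw [sq, PowerSeries.coeff_mul]
  by_cases hm : m % 2 = 0
  · rw [if_pos hm]
    have hqq : ((m / 2, m / 2) : ℕ × ℕ) ∈ Finset.HasAntidiagonal.antidiagonal m := by
      rw [Finset.HasAntidiagonal.mem_antidiagonal]; omega
    rw [← Finset.insert_erase hqq, Finset.sum_insert (Finset.notMem_erase _ _)]
    have hzero :
        ∑ p ∈ (Finset.HasAntidiagonal.antidiagonal m).erase (m / 2, m / 2),
          PowerSeries.coeff p.1 v * PowerSeries.coeff p.2 v = 0 := by
      refine Finset.sum_involution (fun p _ => p.swap) ?_ ?_ ?_ ?_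
      · intro p _
        rw [Prod.fst_swap, Prod.snd_swap, mul_comm]
        exact CharTwo.add_self_eq_zero _
      · intro p hp _
        intro hps
        have h1 := Finset.mem_of_mem_erase hp
        rw [Finset.HasAntidiagonal.mem_antidiagonal] at h1
        have h2 := Finset.ne_of_mem_erase hp
        have : p.1 = p.2 := by
          have := congrArg Prod.fst hps
          simpa using this.symm
        apply h2
        have : p.1 = m / 2 := by omega
        have h3 : p.2 = m / 2 := by omega
        rw [Prod.ext_iff]; exact ⟨this, h3⟩
      · intro p hp
        have h1 := Finset.mem_of_mem_erase hp
        rw [Finset.HasAntidiagonal.mem_antidiagonal] at h1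
        have h2 := Finset.ne_of_mem_erase hp
        refine Finset.mem_erase.2 ⟨?_, ?_⟩
        · intro hps
          apply h2
          have ha := congrArg Prod.fst hps
          have hb := congrArg Prod.snd hps
          simp only [Prod.fst_swap, Prod.snd_swap] at ha hb
          rw [Prod.ext_iff]; exact ⟨hb, ha⟩
        · rw [Finset.HasAntidiagonal.mem_antidiagonal]; simpa [add_comm] using h1
      · intro p _
        simp
    rw [hzero, add_zero, sq]
  · rw [if_neg hm]
    refine Finset.sum_involution (fun p _ => p.swap) ?_ ?_ ?_ ?_
    · intro p _
      rw [Prod.fst_swap, Prod.snd_swap, mul_comm]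
      exact CharTwo.add_self_eq_zero _
    · intro p hp _ hps
      rw [Finset.HasAntidiagonal.mem_antidiagonal] at hp
      have : p.1 = p.2 := by
        have := congrArg Prod.fst hps
        simpa using this.symm
      omega
    · intro p hp
      rw [Finset.HasAntidiagonal.mem_antidiagonal] at hp ⊢
      simpa [add_comm] using hp
    · intro p _
      simp

/-- The recursively defined coefficients solving `v + X v² = g`. -/
private noncomputable def solveCoeff (g : PowerSeries k) : ℕ → k
  | n =>
    PowerSeries.coeff n g +
      if h : n % 2 = 1 then (solveCoeff g ((n - 1) / 2)) ^ 2 else 0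
  decreasing_by omega

private lemma solve_regular (g : PowerSeries k) :
    ∃ v : PowerSeries k, v + PowerSeries.X * v ^ 2 = g := by
  refine ⟨PowerSeries.mk (solveCoeff g), ?_⟩
  ext n
  rw [map_add]
  cases n with
  | zero =>
    rw [PowerSeries.coeff_zero_X_mul, add_zero, PowerSeries.coeff_mk]
    rw [solveCoeff]
    simp
  | succ m =>
    rw [PowerSeries.coeff_succ_X_mul, PowerSeries.coeff_mk, coeff_sq']
    rw [solveCoeff]
    simp only [PowerSeries.coeff_mk]
    by_cases hm : m % 2 = 0
    · have h1 : (m + 1) % 2 = 1 := by omega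
      have h2 : (m + 1 - 1) / 2 = m / 2 := by omega
      rw [dif_pos h1, if_pos hm, h2, add_assoc, CharTwo.add_self_eq_zero, add_zero]
    · have h1 : ¬ (m + 1) % 2 = 1 := by omega
      rw [dif_neg h1, if_neg hm, add_zero, add_zero]

private instance charTwoLaurent : CharP (LaurentSeries k) 2 :=
  charP_of_injective_ringHom (HahnSeries.C_injective (Γ := ℤ) (R := k)) 2

/-- The Artin–Schreier-type property. -/
private def AS (f : LaurentSeries k) : Prop :=
  ∃ u v : LaurentSeries k, u ^ 2 + v + (HahnSeries.single (1 : ℤ) (1 : k)) * v ^ 2 = f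

private lemma AS_add {f g : LaurentSeries k} (hf : AS f) (hg : AS g) : AS (f + g) := by
  obtain ⟨u1, v1, h1⟩ := hf
  obtain ⟨u2, v2, h2⟩ := hg
  refine ⟨u1 + u2, v1 + v2, ?_⟩
  rw [CharTwo.add_sq, CharTwo.add_sq, ← h1, ← h2]
  ring

private lemma AS_regular (f : LaurentSeries k) (hf : ∀ m : ℤ, m < 0 → f.coeff m = 0) :
    AS f := by
  set g : PowerSeries k := PowerSeries.mk (fun s => f.coeff s) with hgdef
  have hg : (HahnSeries.ofPowerSeries ℤ k g) = f := by
    ext m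
    rw [PowerSeries.coeff_coe]
    split_ifs with h
    · exact (hf m h).symm
    · rw [hgdef, PowerSeries.coeff_mk]
      congr 1
      omega
  obtain ⟨v, hv⟩ := solve_regular g
  refine ⟨0, HahnSeries.ofPowerSeries ℤ k v, ?_⟩
  have hX : (HahnSeries.ofPowerSeries ℤ k) PowerSeries.X = HahnSeries.single (1 : ℤ) (1 : k) :=
    HahnSeries.ofPowerSeries_X
  calc (0 : LaurentSeries k) ^ 2 + (HahnSeries.ofPowerSeries ℤ k v) +
        (HahnSeries.single (1 : ℤ) (1 : k)) * (HahnSeries.ofPowerSeries ℤ k v) ^ 2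
      = (HahnSeries.ofPowerSeries ℤ k) (v + PowerSeries.X * v ^ 2) := by
        rw [map_add, map_mul, map_pow, hX]
        ring
    _ = f := by rw [hv, hg]

private lemma AS_bdd : ∀ n : ℕ, ∀ f : LaurentSeries k,
    (∀ m : ℤ, m < -(n : ℤ) → f.coeff m = 0) → AS f := by
  intro n
  induction n using Nat.strong_induction_on with
  | _ n IH =>
    intro f hf
    match n with
    | 0 => exact AS_regular f (by simpa using hf)
    | Nat.succ n' =>
      set N : ℕ := n' + 1 with hN
      set c : k := f.coeff (-(N : ℤ)) with hc
      have hsingle : AS (HahnSeries.single (-(N : ℤ)) c) := by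
        rcases Nat.even_or_odd N with ⟨m, hm⟩ | ⟨m, hm⟩
        · -- even pole order: absorb into u²
          have hm1 : 1 ≤ m := by omega
          obtain ⟨a, ha⟩ := exists_sqrt' c
          refine ⟨HahnSeries.single (-(m : ℤ)) a, 0, ?_⟩
          rw [sq, HahnSeries.single_mul_single]
          have : (-(m : ℤ)) + (-(m : ℤ)) = -(N : ℤ) := by push_cast; omega
          rw [this]
          simp [← sq, ha]
        · -- odd pole order
          rcases Nat.eq_zero_or_pos m with hm0 | hm1
          · -- N = 1 : Artin–Schreier in the residue field
            obtain ⟨a, ha⟩ := exists_as' c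
            refine ⟨0, HahnSeries.single (-1 : ℤ) a, ?_⟩
            rw [HahnSeries.single_pow, HahnSeries.single_mul_single]
            have hNe : -(N : ℤ) = -1 := by omega
            rw [hNe]
            have h1 : (1 : ℤ) + (2 • (-1 : ℤ)) = -1 := by simp
            rw [h1]
            have : (0 : LaurentSeries k) ^ 2 + HahnSeries.single (-1 : ℤ) a +
                HahnSeries.single (-1 : ℤ) (1 * a ^ 2) =
                HahnSeries.single (-1 : ℤ) (a + 1 * a ^ 2) := by
              rw [show HahnSeries.single (-1 : ℤ) (a + 1 * a ^ 2) =
                  HahnSeries.single (-1 : ℤ) a + HahnSeries.single (-1 : ℤ) (1 * a ^ 2) from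
                map_add (HahnSeries.single.addMonoidHom (-1 : ℤ)) _ _]
              ring
            rw [this]
            congr 1
            rw [one_mul, add_comm]
            exact ha
          · -- N = 2m+1, m ≥ 1: reduce to pole order m+1 < N
            obtain ⟨a, ha⟩ := exists_sqrt' c
            have hsub : AS (HahnSeries.single (-((m : ℤ) + 1)) a) := by
              refine IH (m + 1) (by omega) _ ?_
              intro m' hm'
              apply HahnSeries.coeff_single_of_ne
              push_cast at hm' ⊢
              omega
            have hphi : AS (HahnSeries.single (-(N : ℤ)) c +
                HahnSeries.single (-((m : ℤ) + 1)) a) := by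
              refine ⟨0, HahnSeries.single (-((m : ℤ) + 1)) a, ?_⟩
              rw [HahnSeries.single_pow, HahnSeries.single_mul_single]
              have h1 : (1 : ℤ) + (2 • -((m : ℤ) + 1)) = -(N : ℤ) := by
                rw [two_smul]; push_cast; omega
              rw [h1]
              have h2 : (1 : k) * a ^ 2 = c := by rw [one_mul, ha]
              rw [h2]
              ring
            have := AS_add hphi hsub
            rwa [add_assoc, CharTwo.add_self_eq_zero, add_zero] at this
      have hrest : AS (f - HahnSeries.single (-(N : ℤ)) c) := by
        refine IH n' (by omega) _ ?_
        intro m hm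
        rw [HahnSeries.coeff_sub]
        rcases eq_or_ne m (-(N : ℤ)) with rfl | hne
        · rw [HahnSeries.coeff_single_same, ← hc, sub_self]
        · rw [HahnSeries.coeff_single_of_ne hne, sub_zero]
          apply hf
          push_cast at hm ⊢
          omega
      have := AS_add hrest hsingle
      rwa [sub_add_cancel] at this

end Aux

/-- Let `k` be an algebraically closed field of characteristic `2` and `K = k((t))` the
field of formal Laurent series.  Then the map `Φ(u,v) = u² + v + t v²` from `K × K` to
`K` is surjective: every `f ∈ K` can be written as `u² + v + t v²`. -/
theorem stmt1 (k : Type*) [Field k] [IsAlgClosed k] [CharP k 2]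
    (f : LaurentSeries k) :
    ∃ u v : LaurentSeries k,
      u ^ 2 + v + (HahnSeries.single (1 : ℤ) (1 : k)) * v ^ 2 = f := by
  have : AS f := by
    apply AS_bdd (-f.order).toNat
    intro m hm
    apply HahnSeries.coeff_eq_zero_of_lt_order
    have h1 : -((-f.order).toNat : ℤ) ≤ f.order := by
      have := Int.self_le_toNat (-f.order)
      omega
    omega
  exact this
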